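/- For 1 < β ≤ 2 and φ(x) = x^β - 1 - β(x-1), the inequality x^{β-1} y + (1-β) x - y + β - 1 ≤ φ(x)^{(β-1)/β} φ(y)^{1/β} holds for all x, y ≥ 0. -/

import Mathlib

open Real Set

namespace PEI

noncomputable def f (β x : ℝ) : ℝ := x ^ β - 1 - β * (x - 1)
noncomputable def ψ (β x : ℝ) : ℝ := f β x ^ (1/β)
noncomputable def g (β x : ℝ) : ℝ := (x ^ (β-1) - 1) * f β x ^ (1/β - 1)

variable {β : ℝ}

lemma f_nonneg (hβ1 : 1 < β) {x : ℝ} (hx : 0 ≤ x) : 0 ≤ f β x := by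
  have h := one_add_mul_self_le_rpow_one_add (s := x - 1) (by linarith) hβ1.le
  have hx' : (1 : ℝ) + (x - 1) = x := by ring
  rw [hx'] at h
  unfold f; linarith

lemma f_pos (hβ1 : 1 < β) {x : ℝ} (hx : 0 ≤ x) (hx1 : x ≠ 1) : 0 < f β x := by
  have h := one_add_mul_self_lt_rpow_one_add (s := x - 1) (by linarith)
    (by intro h; apply hx1; linarith [sub_eq_zero.mp h]) hβ1
  have hx' : (1 : ℝ) + (x - 1) = x := by ring
  rw [hx'] at h
  unfold f; linarith

lemma f_one : f β 1 = 0 := by simp [f]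

lemma hasDerivAt_f (hβ1 : 1 < β) (x : ℝ) :
    HasDerivAt (f β) (β * x ^ (β-1) - β) x := by
  have h1 : HasDerivAt (fun x : ℝ => x ^ β) (β * x ^ (β-1)) x :=
    Real.hasDerivAt_rpow_const (Or.inr hβ1.le)
  have h2 : HasDerivAt (fun x : ℝ => β * (x - 1)) (β * 1) x :=
    ((hasDerivAt_id x).sub_const 1).const_mul β
  have h := (h1.sub_const 1).sub h2
  rw [mul_one] at h
  exact h

lemma hasDerivAt_ψ (hβ1 : 1 < β) {x : ℝ} (hf : f β x ≠ 0) :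
    HasDerivAt (ψ β) (g β x) x := by
  have hβ0 : β ≠ 0 := by positivity
  have h1 := (Real.hasDerivAt_rpow_const (x := f β x) (p := 1/β)
    (Or.inl hf)).comp x (hasDerivAt_f hβ1 x)
  refine h1.congr_deriv ?_
  unfold g
  field_simp

lemma hasDerivAt_g (hβ1 : 1 < β) {x : ℝ} (hx : 0 < x) (hf : 0 < f β x) :
    HasDerivAt (g β)
      ((β-1) * f β x ^ (1/β - 2) * (x^(β-2) * f β x - (x^(β-1)-1)^2)) x := by
  have hβ0 : β ≠ 0 := by positivity
  have h1 : HasDerivAt (fun t : ℝ => t ^ (β-1) - 1) ((β-1) * x^(β-2)) x := by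
    have := (Real.hasDerivAt_rpow_const (x := x) (p := β-1) (Or.inl hx.ne')).sub_const 1
    exact this.congr_deriv (by ring_nf)
  have h2 : HasDerivAt (fun t : ℝ => f β t ^ (1/β - 1))
      ((1/β - 1) * f β x ^ (1/β - 2) * (β * x^(β-1) - β)) x := by
    have := (Real.hasDerivAt_rpow_const (x := f β x) (p := 1/β - 1)
      (Or.inl hf.ne')).comp x (hasDerivAt_f hβ1 x)
    exact this.congr_deriv (by ring_nf)
  have h3 := h1.mul h2
  have hA : f β x ^ (1/β - 1) = f β x ^ (1/β - 2) * f β x := by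
    rw [show (1/β - 1 : ℝ) = (1/β - 2) + 1 by ring, Real.rpow_add hf, Real.rpow_one]
  refine h3.congr_deriv ?_
  rw [hA]
  field_simp
  ring

lemma K_nonneg (hβ1 : 1 < β) (hβ2 : β ≤ 2) {t : ℝ} (ht : 0 < t) :
    0 ≤ t^(β-2) * f β t - (t^(β-1)-1)^2 := by
  have amgm := Real.geom_mean_le_arith_mean2_weighted
    (by linarith : (0:ℝ) ≤ β - 1) (by linarith : (0:ℝ) ≤ 2 - β)
    (Real.rpow_nonneg ht.le (β-2)) (Real.rpow_nonneg ht.le (β-1)) (by ring)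
  have hL : (t^(β-2))^(β-1) * (t^(β-1))^(2-β) = 1 := by
    rw [← Real.rpow_mul ht.le, ← Real.rpow_mul ht.le, ← Real.rpow_add ht,
      show (β-2)*(β-1) + (β-1)*(2-β) = (0:ℝ) by ring, Real.rpow_zero]
  rw [hL] at amgm
  have ha : t^(β-2) * t^β = t^(β-1) * t^(β-1) := by
    rw [← Real.rpow_add ht, ← Real.rpow_add ht]; ring_nf
  have hb : t^(β-2) * t = t^(β-1) := by
    nth_rewrite 2 [← Real.rpow_one t]
    rw [← Real.rpow_add ht]; ring_nf
  unfold f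
  nlinarith [amgm, ha, hb]

lemma g_mono (hβ1 : 1 < β) (hβ2 : β ≤ 2) {D : Set ℝ} (hD : Convex ℝ D)
    (hDo : IsOpen D) (hDsub : ∀ t ∈ D, 0 < t ∧ t ≠ 1) : MonotoneOn (g β) D := by
  have hderiv : ∀ t ∈ D, HasDerivAt (g β)
      ((β-1) * f β t ^ (1/β - 2) * (t^(β-2) * f β t - (t^(β-1)-1)^2)) t := by
    intro t ht
    obtain ⟨ht0, ht1⟩ := hDsub t ht
    exact hasDerivAt_g hβ1 ht0 (f_pos hβ1 ht0.le ht1)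
  have hdiff : DifferentiableOn ℝ (g β) D := fun t ht =>
    ((hderiv t ht).differentiableAt).differentiableWithinAt
  apply monotoneOn_of_deriv_nonneg hD hdiff.continuousOn
  · rw [hDo.interior_eq]; exact hdiff
  · intro t ht
    rw [hDo.interior_eq] at ht
    rw [(hderiv t ht).deriv]
    obtain ⟨ht0, ht1⟩ := hDsub t ht
    have := K_nonneg hβ1 hβ2 ht0
    have h1 : (0:ℝ) ≤ β - 1 := by linarith
    exact mul_nonneg (mul_nonneg h1 (Real.rpow_nonneg (f_pos hβ1 ht0.le ht1).le _)) this

lemma continuous_ψ (hβ1 : 1 < β) : Continuous (ψ β) := by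
  have hf : Continuous (f β) := by
    have h1 : Continuous fun x : ℝ => x ^ β :=
      continuous_iff_continuousAt.2 fun x =>
        Real.continuousAt_rpow_const x β (Or.inr (by linarith))
    unfold f
    fun_prop
  refine continuous_iff_continuousAt.2 fun x => ?_
  exact hf.continuousAt.rpow_const (Or.inr (by positivity))

lemma convex_ψ (hβ1 : 1 < β) (hβ2 : β ≤ 2) {D : Set ℝ} (hD : Convex ℝ D)
    (hint : interior D ⊆ {t : ℝ | 0 < t ∧ t ≠ 1}) : ConvexOn ℝ D (ψ β) := by
  have hmono : MonotoneOn (g β) (interior D) :=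
    g_mono hβ1 hβ2 (hD.interior) isOpen_interior (fun t ht => hint ht)
  apply MonotoneOn.convexOn_of_deriv hD (continuous_ψ hβ1).continuousOn
  · intro t ht
    obtain ⟨ht0, ht1⟩ := hint ht
    exact ((hasDerivAt_ψ hβ1 (f_pos hβ1 ht0.le ht1).ne').differentiableAt).differentiableWithinAt
  · intro a ha b hb hab
    obtain ⟨ha0, ha1⟩ := hint ha
    obtain ⟨hb0, hb1⟩ := hint hb
    rw [(hasDerivAt_ψ hβ1 (f_pos hβ1 ha0.le ha1).ne').deriv,
      (hasDerivAt_ψ hβ1 (f_pos hβ1 hb0.le hb1).ne').deriv]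
    exact hmono ha hb hab

lemma tangent (hβ1 : 1 < β) {D : Set ℝ} (hconv : ConvexOn ℝ D (ψ β)) {x y : ℝ}
    (hx : x ∈ D) (hy : y ∈ D) (hfx : f β x ≠ 0) :
    g β x * (y - x) ≤ ψ β y - ψ β x := by
  rcases lt_trichotomy x y with h | h | h
  · have hs := hconv.le_slope_of_hasDerivAt hx hy h (hasDerivAt_ψ hβ1 hfx)
    rw [slope_def_field] at hs
    have h' : 0 < y - x := by linarith
    calc g β x * (y - x) ≤ (ψ β y - ψ β x) / (y - x) * (y - x) := by
          exact mul_le_mul_of_nonneg_right hs h'.le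
      _ = ψ β y - ψ β x := by field_simp
  · subst h; simp
  · have hs := hconv.slope_le_of_hasDerivAt hy hx h (hasDerivAt_ψ hβ1 hfx)
    rw [slope_def_field] at hs
    have h' : 0 < x - y := by linarith
    have := mul_le_mul_of_nonneg_right hs h'.le
    rw [div_mul_cancel₀] at this
    · nlinarith [this]
    · exact h'.ne'

lemma tangent_scaled (hβ1 : 1 < β) {D : Set ℝ} (hconv : ConvexOn ℝ D (ψ β)) {x y : ℝ}
    (hx0 : 0 ≤ x) (hx1 : x ≠ 1) (hx : x ∈ D) (hy : y ∈ D) :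
    (x^(β-1) - 1) * (y - x) ≤ f β x ^ ((β-1)/β) * (ψ β y - ψ β x) := by
  have hβ0 : β ≠ 0 := by positivity
  have hfx := f_pos hβ1 hx0 hx1
  have ht := tangent hβ1 hconv hx hy hfx.ne'
  have hc : f β x ^ ((β-1)/β) * g β x = x^(β-1) - 1 := by
    unfold g
    rw [show f β x ^ ((β-1)/β) * ((x^(β-1) - 1) * f β x ^ (1/β - 1))
        = (x^(β-1) - 1) * (f β x ^ ((β-1)/β) * f β x ^ (1/β - 1)) by ring,
      ← Real.rpow_add hfx, show (β-1)/β + (1/β - 1) = (0:ℝ) by field_simp; ring,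
      Real.rpow_zero, mul_one]
  have := mul_le_mul_of_nonneg_left ht (Real.rpow_nonneg hfx.le ((β-1)/β))
  calc (x^(β-1) - 1) * (y - x) = f β x ^ ((β-1)/β) * g β x * (y - x) := by rw [hc]
    _ = f β x ^ ((β-1)/β) * (g β x * (y - x)) := by ring
    _ ≤ f β x ^ ((β-1)/β) * (ψ β y - ψ β x) := this

lemma ψ_one (hβ1 : 1 < β) : ψ β 1 = 0 := by
  have hβ0 : (1:ℝ)/β ≠ 0 := by positivity
  rw [ψ, f_one, Real.zero_rpow hβ0]

lemma main (hβ1 : 1 < β) (hβ2 : β ≤ 2) {x y : ℝ} (hx : 0 ≤ x) (hy : 0 ≤ y) :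
    (x^(β-1) - 1) * (y - x) ≤ f β x ^ ((β-1)/β) * (ψ β y - ψ β x) := by
  have hβ0 : (0:ℝ) < β := by linarith
  have hconv1 : ConvexOn ℝ (Icc (0:ℝ) 1) (ψ β) := by
    apply convex_ψ hβ1 hβ2 (convex_Icc 0 1)
    rw [interior_Icc]
    rintro t ⟨ht0, ht1⟩
    exact ⟨ht0, ht1.ne⟩
  have hconv2 : ConvexOn ℝ (Ici (1:ℝ)) (ψ β) := by
    apply convex_ψ hβ1 hβ2 (convex_Ici 1)
    rw [interior_Ici]
    rintro t ht
    exact ⟨by linarith [mem_Ioi.mp ht], (mem_Ioi.mp ht).ne'⟩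
  rcases eq_or_ne x 1 with rfl | hx1
  · have h1 : ((1:ℝ)^(β-1) - 1) = 0 := by rw [Real.one_rpow]; ring
    rw [h1, zero_mul, f_one, Real.zero_rpow (div_pos (by linarith) (by linarith)).ne', zero_mul]
  rcases le_or_gt x 1 with hxle | hxgt
  · rcases le_or_gt y 1 with hyle | hygt
    · exact tangent_scaled hβ1 hconv1 hx hx1 ⟨hx, hxle⟩ ⟨hy, hyle⟩
    · -- x < 1 < y
      have h1 := tangent_scaled hβ1 hconv1 hx hx1 ⟨hx, hxle⟩ (right_mem_Icc.mpr (by norm_num))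
      rw [ψ_one hβ1] at h1
      have hm : x^(β-1) ≤ 1 := Real.rpow_le_one hx hxle (by linarith)
      have hψy : 0 ≤ ψ β y := Real.rpow_nonneg (f_nonneg hβ1 hy) _
      have hc0 : 0 ≤ f β x ^ ((β-1)/β) := Real.rpow_nonneg (f_nonneg hβ1 hx) _
      nlinarith [mul_nonneg (by linarith : (0:ℝ) ≤ 1 - x^(β-1)) (by linarith : (0:ℝ) ≤ y - 1),
        mul_nonneg hc0 hψy]
  · rcases le_or_gt 1 y with hyge | hylt
    · exact tangent_scaled hβ1 hconv2 hx hx1 hxgt.le hyge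
    · -- y < 1 < x
      have h1 := tangent_scaled hβ1 hconv2 hx hx1 hxgt.le (mem_Ici.mpr le_rfl)
      rw [ψ_one hβ1] at h1
      have hm : 1 ≤ x^(β-1) := Real.one_le_rpow hxgt.le (by linarith)
      have hψy : 0 ≤ ψ β y := Real.rpow_nonneg (f_nonneg hβ1 hy) _
      have hc0 : 0 ≤ f β x ^ ((β-1)/β) := Real.rpow_nonneg (f_nonneg hβ1 hx) _
      nlinarith [mul_nonneg (by linarith : (0:ℝ) ≤ x^(β-1) - 1) (by linarith : (0:ℝ) ≤ 1 - y),
        mul_nonneg hc0 hψy]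

end PEI

open PEI in
theorem pointwise_entropy_inequality (β : ℝ) (hβ1 : 1 < β) (hβ2 : β ≤ 2)
    (φ : ℝ → ℝ) (hφ : ∀ x : ℝ, φ x = x ^ β - 1 - β * (x - 1)) :
    ∀ x y : ℝ, 0 ≤ x → 0 ≤ y →
      x ^ (β - 1) * y + (1 - β) * x - y + β - 1 ≤
        φ x ^ ((β - 1) / β) * φ y ^ (1 / β) := by
  intro x y hx hy
  have hβ0 : (0:ℝ) < β := by linarith
  have hφx : φ x = f β x := by rw [hφ, f]
  have hφy : φ y = f β y := by rw [hφ, f]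
  rw [hφx, hφy]
  have key := main hβ1 hβ2 hx hy
  have hψx : f β x ^ ((β-1)/β) * ψ β x = f β x := by
    have he : (β-1)/β + 1/β = 1 := by field_simp; ring
    rw [ψ, ← Real.rpow_add' (f_nonneg hβ1 hx) (by rw [he]; norm_num), he, Real.rpow_one]
  have hxx : x ^ (β - 1) * x = x ^ β := by
    have h := Real.rpow_add' (x := x) hx (y := β - 1) (z := 1)
      (by rw [show β - 1 + 1 = β by ring]; exact hβ0.ne')
    rw [Real.rpow_one, show β - 1 + 1 = β by ring] at h
    exact h.symm
  have goal' : x ^ (β-1) * y + (1-β)*x - y + β - 1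
      = f β x + (x^(β-1) - 1) * (y - x) := by
    rw [f, ← hxx]; ring
  have rhs' : f β x ^ ((β-1)/β) * f β y ^ (1/β)
      = f β x ^ ((β-1)/β) * (ψ β y - ψ β x) + f β x := by
    rw [show f β y ^ (1/β) = ψ β y from rfl, mul_sub, hψx]; ring
  rw [goal', rhs']
  linarith [key]
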